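/- Define, for points P = ((rho1+|z1|^2)/2 + i t1, z1) and R = ((rho2+|z2|^2)/2 + i t2, z2) in the Siegel domain (rho1, rho2 > 0), the point-pair function delta(P,R) = [(rho1 + rho2 + |z1 - z2|^2)^2 + 4(t2 - t1 + Im(z1 conj(z2)))^2 + 4 rho1 rho2] / (8 rho1 rho2). Then for Q = (1/2, 0) (i.e. rho = 1, t = 0, z = 0), the triangle-type inequality delta(P,R) <= 72 · delta(P,Q) · delta(Q,R) holds for all such P, R. -/

import Mathlib

set_option maxHeartbeats 1000000


open Complex

/-- Triangle-type inequality `δ(P,R) ≤ 72 δ(P,Q) δ(Q,R)` for the point-pair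
function `δ` on the Siegel domain, with `Q = (1/2, 0)`, in horospherical
coordinates `P = ((ρ₁+|z₁|²)/2 + it₁, z₁)`, `R = ((ρ₂+|z₂|²)/2 + it₂, z₂)`. -/
theorem delta_triangle (ρ1 ρ2 t1 t2 : ℝ) (z1 z2 : ℂ)
    (hρ1 : 0 < ρ1) (hρ2 : 0 < ρ2) :
    ((ρ1 + ρ2 + ‖z1 - z2‖ ^ 2) ^ 2
        + 4 * (t2 - t1 + (z1 * (starRingEnd ℂ) z2).im) ^ 2 + 4 * ρ1 * ρ2)
      / (8 * ρ1 * ρ2)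
    ≤ 72 * (((1 + ρ1 + ‖z1‖ ^ 2) ^ 2 / 4 + t1 ^ 2 + ρ1) / (2 * ρ1))
         * (((1 + ρ2 + ‖z2‖ ^ 2) ^ 2 / 4 + t2 ^ 2 + ρ2) / (2 * ρ2)) := by
  set x := ‖z1‖ with hx
  set y := ‖z2‖ with hy
  set c := ‖z1 - z2‖ with hcdef
  set s := (z1 * (starRingEnd ℂ) z2).im with hsdef
  have hx0 : 0 ≤ x := norm_nonneg _
  have hy0 : 0 ≤ y := norm_nonneg _
  have hc0 : 0 ≤ c := norm_nonneg _
  have hc : c ≤ x + y := by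
    simpa [hcdef, hx, hy] using norm_sub_le z1 z2
  have hs : |s| ≤ x * y := by
    calc |s| ≤ ‖z1 * (starRingEnd ℂ) z2‖ := Complex.abs_im_le_norm _
    _ = x * y := by rw [norm_mul, Complex.norm_conj]
  have hs2 : s ^ 2 ≤ x ^ 2 * y ^ 2 := by
    have h := _root_.sq_abs s
    nlinarith [abs_nonneg s, mul_nonneg hx0 hy0]
  set a1 := 1 + ρ1 + x ^ 2 with ha1def
  set a2 := 1 + ρ2 + y ^ 2 with ha2def
  have ha1 : 1 ≤ a1 := by nlinarith [sq_nonneg x]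
  have ha2 : 1 ≤ a2 := by nlinarith [sq_nonneg y]
  have h5a : 4 * x ^ 2 ≤ a1 ^ 2 := by nlinarith [sq_nonneg (1 - x ^ 2), sq_nonneg x]
  have h5b : 4 * y ^ 2 ≤ a2 ^ 2 := by nlinarith [sq_nonneg (1 - y ^ 2), sq_nonneg y]
  clear_value x y c s a1 a2
  have h1 : c ^ 2 ≤ 2 * x ^ 2 + 2 * y ^ 2 := by nlinarith [sq_nonneg (x - y)]
  have h2 : (ρ1 + ρ2 + c ^ 2) ^ 2 ≤ 4 * (a1 ^ 2 * a2 ^ 2) := by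
    have hle : ρ1 + ρ2 + c ^ 2 ≤ 2 * (a1 * a2) := by
      nlinarith [mul_nonneg (sub_nonneg.2 ha1) (sub_nonneg.2 ha2)]
    have h0 : 0 ≤ ρ1 + ρ2 + c ^ 2 := by positivity
    calc (ρ1 + ρ2 + c ^ 2) ^ 2 ≤ (2 * (a1 * a2)) ^ 2 := by
          apply pow_le_pow_left₀ h0 hle 2
    _ = 4 * (a1 ^ 2 * a2 ^ 2) := by ring
  have h3 : (t2 - t1 + s) ^ 2 ≤ 3 * t1 ^ 2 + 3 * t2 ^ 2 + 3 * s ^ 2 := by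
    nlinarith [sq_nonneg (t2 + t1), sq_nonneg (t1 + s), sq_nonneg (t2 - s)]
  have h16 : (4 * x ^ 2) * (4 * y ^ 2) ≤ a1 ^ 2 * a2 ^ 2 :=
    mul_le_mul h5a h5b (by positivity) (by positivity)
  have h4 : 12 * s ^ 2 ≤ (3 / 4) * (a1 ^ 2 * a2 ^ 2) := by nlinarith [h16, hs2]
  have key : (ρ1 + ρ2 + c ^ 2) ^ 2 + 4 * (t2 - t1 + s) ^ 2 + 4 * ρ1 * ρ2
      ≤ 144 * ((a1 ^ 2 / 4 + t1 ^ 2 + ρ1) * (a2 ^ 2 / 4 + t2 ^ 2 + ρ2)) := by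
    have ha1sq : (1:ℝ) ≤ a1 ^ 2 := by nlinarith
    have ha2sq : (1:ℝ) ≤ a2 ^ 2 := by nlinarith
    have e1 : 12 * t1 ^ 2 ≤ 12 * (t1 ^ 2 * a2 ^ 2) := by
      nlinarith [mul_le_mul_of_nonneg_left ha2sq (sq_nonneg t1)]
    have e2 : 12 * t2 ^ 2 ≤ 12 * (t2 ^ 2 * a1 ^ 2) := by
      nlinarith [mul_le_mul_of_nonneg_left ha1sq (sq_nonneg t2)]
    have expand : 144 * ((a1 ^ 2 / 4 + t1 ^ 2 + ρ1) * (a2 ^ 2 / 4 + t2 ^ 2 + ρ2))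
        = 9 * (a1 ^ 2 * a2 ^ 2) + 36 * (a1 ^ 2 * t2 ^ 2) + 36 * (a1 ^ 2 * ρ2)
          + 36 * (t1 ^ 2 * a2 ^ 2) + 144 * (t1 ^ 2 * t2 ^ 2) + 144 * (t1 ^ 2 * ρ2)
          + 36 * (ρ1 * a2 ^ 2) + 144 * (ρ1 * t2 ^ 2) + 144 * (ρ1 * ρ2) := by ring
    have n1 : 0 ≤ a1 ^ 2 * ρ2 := by positivity
    have n2 : 0 ≤ t1 ^ 2 * t2 ^ 2 := by positivity
    have n3 : 0 ≤ t1 ^ 2 * ρ2 := by positivity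
    have n4 : 0 ≤ ρ1 * a2 ^ 2 := by positivity
    have n5 : 0 ≤ ρ1 * t2 ^ 2 := by positivity
    have n6 : 0 ≤ ρ1 * ρ2 := by positivity
    have n7 : 0 ≤ a1 ^ 2 * a2 ^ 2 := by positivity
    have n8 : 0 ≤ t1 ^ 2 * a2 ^ 2 := by positivity
    have n9 : 0 ≤ a1 ^ 2 * t2 ^ 2 := by positivity
    rw [expand]
    nlinarith [h2, h3, h4, e1, e2]
  have hd : (0:ℝ) < 8 * ρ1 * ρ2 := by positivity
  have heq : 72 * ((a1 ^ 2 / 4 + t1 ^ 2 + ρ1) / (2 * ρ1)) * ((a2 ^ 2 / 4 + t2 ^ 2 + ρ2) / (2 * ρ2))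
      = 144 * ((a1 ^ 2 / 4 + t1 ^ 2 + ρ1) * (a2 ^ 2 / 4 + t2 ^ 2 + ρ2)) / (8 * ρ1 * ρ2) := by
    field_simp
    ring
  rw [heq, div_le_div_iff₀ hd hd]
  exact mul_le_mul_of_nonneg_right key hd.le
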